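/- arXiv:1312.2196 — 3 statements merged into one kernel-verified Lean document; each statement's English description precedes it below -/
import Mathlib

section
/- For the specific coefficients with n = 2, A_{j,j} = O and A_{j,j+1} = A_{j+1,j} = (j+1)·E (j ≥ 0), and for any nonzero vector v ∈ ℂ², the sequence defined by u_{−1} = 0 and u_j = i^j·v for j ≥ 0 (i the imaginary unit) is a solution of the vector equation (1v) at z = i; it satisfies sup_j |u_j| < ∞ but |u_j| does not tend to 0 as j → ∞, and consequently it does not belong to l^p_2 for any finite p ≥ 1. -/
open Matrix Filter
open scoped BigOperators ENNReal

/-- Square `n × n` complex matrices. -/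
abbrev Mat (n : ℕ) := Matrix (Fin n) (Fin n) ℂ

/-- `Alo b j` is the coefficient `A_{j,j-1}` (so `Alo b 0 = A_{0,-1} = -E` and
`Alo b (j+1) = A_{j+1,j} = b j`). -/
def Alo {n : ℕ} (b : ℕ → Mat n) : ℕ → Mat n
  | 0 => -1
  | j + 1 => b j

/-- `Aup a j` is the coefficient `A_{j-1,j}` (so `Aup a 0 = A_{-1,0} = -E` and
`Aup a (j+1) = A_{j,j+1} = a j`). -/
def Aup {n : ℕ} (a : ℕ → Mat n) : ℕ → Mat n
  | 0 => -1
  | j + 1 => a j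

/-- Matrix equation (1).  Sequences are indexed by `ℕ`, where index `k` represents the
paper index `k - 1` (so index `0` is the paper index `-1`).  Here `d j = A_{j,j}`,
`a j = A_{j,j+1}`, `b j = A_{j+1,j}`. -/
def SolEq1 {n : ℕ} (d a b : ℕ → Mat n) (z : ℂ) (Y : ℕ → Mat n) : Prop :=
  ∀ j : ℕ, Alo b j * Y j + d j * Y (j + 1) + a j * Y (j + 2) = z • Y (j + 1)

/-- Matrix equation (2), with the same index shift. -/
def SolEq2 {n : ℕ} (d a b : ℕ → Mat n) (z : ℂ) (Y : ℕ → Mat n) : Prop :=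
  ∀ j : ℕ, Y j * Aup a j + Y (j + 1) * d j + Y (j + 2) * b j = z • Y (j + 1)

/-- Vector equation (1v), with the same index shift. -/
def SolEq1v {n : ℕ} (d a b : ℕ → Mat n) (z : ℂ) (u : ℕ → Fin n → ℂ) : Prop :=
  ∀ j : ℕ, Alo b j *ᵥ u j + d j *ᵥ u (j + 1) + a j *ᵥ u (j + 2) = z • u (j + 1)

/-- Vector equation (2v) for the row vectors `v_j^*`, with the same index shift. -/
def SolEq2v {n : ℕ} (d a b : ℕ → Mat n) (z : ℂ) (v : ℕ → Fin n → ℂ) : Prop :=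
  ∀ j : ℕ, star (v j) ᵥ* Aup a j + star (v (j + 1)) ᵥ* d j + star (v (j + 2)) ᵥ* b j
    = z • star (v (j + 1))

/-- for the coefficients `A_{j,j} = O`, `A_{j,j+1} = A_{j+1,j} = (j+1)E`
with `n = 2` and any nonzero `v ∈ ℂ²`, the sequence `u_{-1} = 0`, `u_j = i^j v` (`j ≥ 0`)
solves (1v) at `z = i`; it is bounded, its norm does not tend to `0`, and it is not in
`l^p_2` for any finite `p ≥ 1`. -/
theorem statement17 (v : Fin 2 → ℂ) (hv : v ≠ 0)
    (u : ℕ → Fin 2 → ℂ) (hu0 : u 0 = 0)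
    (huj : ∀ j : ℕ, u (j + 1) = Complex.I ^ j • v) :
    SolEq1v (fun _ => 0) (fun j => ((j : ℂ) + 1) • 1) (fun j => ((j : ℂ) + 1) • 1)
      Complex.I u ∧
    (∃ C : ℝ, ∀ j : ℕ, ‖u j‖ ≤ C) ∧
    ¬ Tendsto (fun j : ℕ => ‖u j‖) atTop (nhds 0) ∧
    ∀ p : ℝ, 1 ≤ p → ¬ Summable (fun j : ℕ => ‖u j‖ ^ p) := by
  have hnorm : ∀ j : ℕ, ‖u (j + 1)‖ = ‖v‖ := by
    intro j
    rw [huj j, norm_smul, norm_pow, Complex.norm_I, one_pow, one_mul]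
  have hvpos : 0 < ‖v‖ := norm_pos_iff.mpr hv
  refine ⟨?_, ⟨‖v‖, ?_⟩, ?_, ?_⟩
  · intro j
    cases j with
    | zero =>
      simp only [Alo, hu0, huj, pow_zero, pow_one, one_smul]
      simp [Matrix.mulVec_smul, smul_smul]
    | succ j =>
      simp only [Alo, huj, Nat.cast_add, Nat.cast_one]
      simp only [Matrix.smul_mulVec, Matrix.one_mulVec, Matrix.zero_mulVec,
        add_zero, zero_add]
      rw [smul_smul, smul_smul, smul_smul, ← add_smul]
      congr 1
      ring_nf
      rw [Complex.I_sq]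
      ring
  · intro j
    cases j with
    | zero => simp [hu0, hvpos.le]
    | succ j => rw [hnorm j]
  · intro h
    have h2 : Tendsto (fun j : ℕ => ‖u (j + 1)‖) atTop (nhds 0) :=
      h.comp (tendsto_add_atTop_nat 1)
    have : Tendsto (fun _ : ℕ => ‖v‖) atTop (nhds 0) := by
      simpa only [hnorm] using h2
    exact absurd (tendsto_const_nhds_iff.mp this) (ne_of_gt hvpos)
  · intro p hp hs
    have hs2 : Summable (fun j : ℕ => ‖u (j + 1)‖ ^ p) := by
      exact (summable_nat_add_iff 1).mpr hs
    have : Summable (fun _ : ℕ => ‖v‖ ^ p) := by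
      simpa only [hnorm] using hs2
    have := this.tendsto_atTop_zero
    have h0 : ‖v‖ ^ p = 0 := tendsto_const_nhds_iff.mp this
    exact absurd h0 (ne_of_gt (Real.rpow_pos_of_pos hvpos p))
end

section
/- (Theorem 4: Theorem 3 fails for p > 2.) For every p with 2 < p < ∞ there exist n ≥ 1 and coefficients A_{j,j}, A_{j,j+1}, A_{j+1,j} satisfying the symmetry condition (simm), together with z_0 ∈ ℝ, such that every solution of the vector equation (1v) at z_0 belongs to l^p_n, while there exist z ∈ ℂ and a solution of (1v) at z that does not belong to l^p_n. -/
open Matrix Filter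
open scoped BigOperators ENNReal ComplexOrder

/-- Auxiliary real bound: a sequence satisfying the recurrence
`(j+2) g (j+3) = (j+1) g (j+1)` together with `g 2 = g 0` decays like `1/√j`. -/
lemma st18_bound (g : ℕ → ℝ) (hg : ∀ j, 0 ≤ g j) (h2 : g 2 = g 0)
    (hrec : ∀ j : ℕ, ((j:ℝ)+2) * g (j+3) = ((j:ℝ)+1) * g (j+1)) :
    ∀ m : ℕ, g (m+1) ≤ (Real.sqrt 2 * (g 0 + g 1)) / Real.sqrt ((m:ℝ)+1) := by
  set M : ℝ := Real.sqrt 2 * (g 0 + g 1) with hM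
  have hM0 : 0 ≤ M := mul_nonneg (Real.sqrt_nonneg 2) (add_nonneg (hg 0) (hg 1))
  have h1le : (1:ℝ) ≤ Real.sqrt 2 := by
    rw [show (1:ℝ) = Real.sqrt 1 by simp]
    exact Real.sqrt_le_sqrt (by norm_num)
  have key : ∀ m : ℕ, g (m+1) ≤ M / Real.sqrt ((m+1 : ℕ) : ℝ) ∧
      g (m+2) ≤ M / Real.sqrt ((m+2 : ℕ) : ℝ) := by
    intro m
    induction m with
    | zero =>
      constructor
      · rw [show (((0+1:ℕ)):ℝ) = 1 by norm_num, Real.sqrt_one, div_one]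
        nlinarith [hg 0, hg 1]
      · rw [show g (0+2) = g 0 from h2, show (((0+2:ℕ)):ℝ) = 2 by norm_num]
        rw [le_div_iff₀ (by positivity)]
        nlinarith [hg 0, hg 1, Real.sq_sqrt (by norm_num : (0:ℝ) ≤ 2),
          Real.sqrt_nonneg 2, mul_nonneg (Real.sqrt_nonneg 2) (hg 1)]
    | succ k ih =>
      refine ⟨ih.2, ?_⟩
      have hr := hrec k
      have hk2 : (0:ℝ) < (k:ℝ)+2 := by positivity
      have hgk : g (k+3) = (((k:ℝ)+1) / ((k:ℝ)+2)) * g (k+1) := by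
        rw [eq_comm, div_mul_eq_mul_div, div_eq_iff (ne_of_gt hk2)]
        linarith
      have hstep : (((k:ℝ)+1) / ((k:ℝ)+2)) * (M / Real.sqrt ((k:ℝ)+1))
          ≤ M / Real.sqrt ((k:ℝ)+3) := by
        rw [div_mul_div_comm, div_le_div_iff₀ (by positivity) (by positivity)]
        have hs : ((k:ℝ)+1) * Real.sqrt ((k:ℝ)+3) ≤ ((k:ℝ)+2) * Real.sqrt ((k:ℝ)+1) := by
          have e1 : ((k:ℝ)+1) * Real.sqrt ((k:ℝ)+3)
              = Real.sqrt ((((k:ℝ)+1))^2 * (((k:ℝ)+3))) := by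
            rw [Real.sqrt_mul (by positivity), Real.sqrt_sq (by positivity)]
          have e2 : ((k:ℝ)+2) * Real.sqrt ((k:ℝ)+1)
              = Real.sqrt ((((k:ℝ)+2))^2 * (((k:ℝ)+1))) := by
            rw [Real.sqrt_mul (by positivity), Real.sqrt_sq (by positivity)]
          rw [e1, e2]
          exact Real.sqrt_le_sqrt (by nlinarith)
        nlinarith [Real.sqrt_nonneg ((k:ℝ)+1), Real.sqrt_nonneg ((k:ℝ)+3), hM0,
          mul_le_mul_of_nonneg_left hs hM0]
      have hi1 : g (k+1) ≤ M / Real.sqrt ((k:ℝ)+1) := by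
        have := ih.1
        rwa [show (((k+1:ℕ)):ℝ) = (k:ℝ)+1 by push_cast; ring] at this
      have hgoal : g (k+3) ≤ M / Real.sqrt ((k:ℝ)+3) := by
        rw [hgk]
        calc (((k:ℝ)+1) / ((k:ℝ)+2)) * g (k+1)
            ≤ (((k:ℝ)+1) / ((k:ℝ)+2)) * (M / Real.sqrt ((k:ℝ)+1)) := by
              apply mul_le_mul_of_nonneg_left hi1 (by positivity)
          _ ≤ M / Real.sqrt ((k:ℝ)+3) := hstep
      rwa [show (((k+1+2:ℕ)):ℝ) = (k:ℝ)+3 by push_cast; ring]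
  intro m
  have := (key m).1
  rwa [show (((m+1:ℕ)):ℝ) = (m:ℝ)+1 by push_cast; ring] at this

/-- Auxiliary summability lemma: a nonnegative sequence bounded by `M/√(j+1)` has a
summable `p`-th power for `p > 2`. -/
lemma st18_summable (p M : ℝ) (hp : 2 < p) (hM : 0 ≤ M) (f : ℕ → ℝ)
    (hf : ∀ j, 0 ≤ f j) (hb : ∀ m : ℕ, f (m+1) ≤ M / Real.sqrt ((m:ℝ)+1)) :
    Summable (fun j : ℕ => f j ^ p) := by
  rw [← summable_nat_add_iff 1]
  have hs : Summable (fun n : ℕ => 1 / ((n:ℝ)) ^ (p/2)) :=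
    Real.summable_one_div_nat_rpow.mpr (by linarith)
  have hs1 : Summable (fun n : ℕ => M ^ p * (1 / (((n+1:ℕ)):ℝ) ^ (p/2))) :=
    (((summable_nat_add_iff 1).mpr hs)).mul_left _
  refine Summable.of_nonneg_of_le (fun n => Real.rpow_nonneg (hf _) p) (fun n => ?_) hs1
  have h1 : f (n+1) ^ p ≤ (M / Real.sqrt ((n:ℝ)+1)) ^ p :=
    Real.rpow_le_rpow (hf _) (hb n) (by linarith)
  refine h1.trans (le_of_eq ?_)
  have hx : (0:ℝ) ≤ (n:ℝ)+1 := by positivity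
  rw [Real.sqrt_eq_rpow, Real.div_rpow hM (Real.rpow_nonneg hx _),
    ← Real.rpow_mul hx, show (1/2) * p = p/2 by ring,
    show (((n+1:ℕ)):ℝ) = (n:ℝ)+1 by push_cast; ring]
  ring

/-- The explicit non-`l^p` solution at `z = i`. -/
noncomputable def st18_u : ℕ → Fin 1 → ℂ := fun j _ => if j = 0 then 0 else Complex.I ^ j

/-- Theorem 4: Theorem 3 fails for `p > 2`: for every `2 < p < ∞` there
are coefficients satisfying (simm) and a real `z₀` such that all solutions of (1v) at
`z₀` are in `l^p_n`, while at some `z ∈ ℂ` there is a solution not in `l^p_n`. -/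
theorem statement18 :
    ∀ p : ℝ, 2 < p →
      ∃ (n : ℕ), 1 ≤ n ∧
        ∃ d a b : ℕ → Mat n,
          (∀ j, IsUnit (a j)) ∧ (∀ j, IsUnit (b j)) ∧
          (∀ j, (d j).IsHermitian) ∧ (∀ j, b j = a j) ∧ (∀ j, (a j).PosDef) ∧
          ∃ z0 : ℝ,
            (∀ u : ℕ → Fin n → ℂ, SolEq1v d a b (z0 : ℂ) u →
              Summable (fun j : ℕ => ‖u j‖ ^ p)) ∧
            ∃ (z : ℂ) (u : ℕ → Fin n → ℂ),
              SolEq1v d a b z u ∧ ¬ Summable (fun j : ℕ => ‖u j‖ ^ p) := by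
  intro p hp
  refine ⟨1, le_refl 1, (fun _ => 0), (fun j => ((j+1:ℕ) : Mat 1)),
    (fun j => ((j+1:ℕ) : Mat 1)), ?_, ?_, ?_, ?_, ?_, 0, ?_, ?_⟩
  · exact fun j => (Matrix.PosDef.natCast (j+1) (Nat.succ_ne_zero j)).isUnit
  · exact fun j => (Matrix.PosDef.natCast (j+1) (Nat.succ_ne_zero j)).isUnit
  · exact fun j => Matrix.isHermitian_zero
  · exact fun j => rfl
  · exact fun j => Matrix.PosDef.natCast (j+1) (Nat.succ_ne_zero j)
  · -- every solution at z₀ = 0 is in l^p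
    intro u hu
    have h20 : u 2 = u 0 := by
      have h0 := hu 0
      simp [Alo, Matrix.neg_mulVec, Matrix.one_mulVec, Matrix.zero_mulVec,
        Matrix.natCast_mulVec] at h0
      exact (neg_add_eq_zero.mp h0).symm
    have hrec : ∀ j : ℕ, ((j:ℝ)+2) * ‖u (j+3)‖ = ((j:ℝ)+1) * ‖u (j+1)‖ := by
      intro j
      have h1 := hu (j+1)
      simp only [Alo, Matrix.zero_mulVec, Matrix.natCast_mulVec, add_zero,
        Complex.ofReal_zero, zero_smul] at h1
      have hb : (((j+2:ℕ)):ℂ) • u (j+3) = -((((j+1:ℕ)):ℂ) • u (j+1)) :=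
        eq_neg_of_add_eq_zero_right h1
      have h2 := congrArg norm hb
      rw [norm_neg, norm_smul, norm_smul, RCLike.norm_natCast, RCLike.norm_natCast] at h2
      push_cast at h2
      exact h2
    have hb := st18_bound (fun j => ‖u j‖) (fun j => norm_nonneg _)
      (by simpa using congrArg norm h20) hrec
    exact st18_summable p _ hp
      (mul_nonneg (Real.sqrt_nonneg 2) (add_nonneg (norm_nonneg _) (norm_nonneg _)))
      (fun j => ‖u j‖) (fun j => norm_nonneg _) hb
  · -- at z = i there is a solution not in l^p
    refine ⟨Complex.I, st18_u, ?_, ?_⟩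
    · intro j
      match j with
      | 0 =>
        funext x
        simp only [Alo, st18_u, Matrix.neg_mulVec, Matrix.one_mulVec, Matrix.zero_mulVec,
          Matrix.natCast_mulVec, Pi.add_apply, Pi.neg_apply, Pi.smul_apply, smul_eq_mul]
        norm_num
      | j + 1 =>
        funext x
        simp only [Alo, st18_u, Matrix.zero_mulVec, Matrix.natCast_mulVec, Pi.add_apply,
          Pi.zero_apply, Pi.smul_apply, smul_eq_mul, Nat.succ_ne_zero, if_false, add_zero]
        push_cast
        linear_combination ((j:ℂ)+1) * Complex.I ^ (j+1) * Complex.I_sq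
    · intro h
      have h0 := h.tendsto_atTop_zero
      have h1 : Tendsto (fun j : ℕ => ‖st18_u j‖ ^ p) atTop (nhds 1) := by
        have : ∀ᶠ j : ℕ in atTop, (1:ℝ) = ‖st18_u j‖ ^ p := by
          filter_upwards [eventually_ge_atTop 1] with j hj
          have : st18_u j = fun _ => Complex.I ^ j := by
            funext x; simp [st18_u, Nat.one_le_iff_ne_zero.mp hj]
          rw [this, pi_norm_const]
          simp
        exact Tendsto.congr' this tendsto_const_nhds
      exact one_ne_zero (tendsto_nhds_unique h1 h0)
end

section
/- (Scalar Hellinger theorem, pointwise form.) Let (a_i)_{i ≥ 0} and (b_i)_{i ≥ 1} be sequences of complex numbers with a_i ≠ 0 for all i. Suppose that for some z_0 ∈ ℂ every solution (u_i)_{i ≥ 0} of the scalar three-term recurrence a_{i−1}u_{i−1} + b_i u_i + a_i u_{i+1} = z·u_i (i ≥ 1) at z = z_0 satisfies Σ_{i ≥ 0} |u_i|² < ∞. Then for every z ∈ ℂ, every solution of the same recurrence at z satisfies Σ_{i ≥ 0} |u_i|² < ∞. -/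
open Finset Filter

/-- The solution of the three-term recurrence with prescribed initial data. -/
noncomputable def helSol (a b : ℕ → ℂ) (z c0 c1 : ℂ) : ℕ → ℂ
  | 0 => c0
  | 1 => c1
  | (n+2) => ((z - b (n+1)) * helSol a b z c0 c1 (n+1) - a n * helSol a b z c0 c1 n) / a (n+1)

lemma helSol_rec (a b : ℕ → ℂ) (ha : ∀ i, a i ≠ 0) (z c0 c1 : ℂ) (n : ℕ) :
    a n * helSol a b z c0 c1 n + b (n+1) * helSol a b z c0 c1 (n+1)
      + a (n+1) * helSol a b z c0 c1 (n+2) = z * helSol a b z c0 c1 (n+1) := by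
  have : helSol a b z c0 c1 (n+2)
      = ((z - b (n+1)) * helSol a b z c0 c1 (n+1) - a n * helSol a b z c0 c1 n) / a (n+1) := rfl
  have h2 : a (n+1) * helSol a b z c0 c1 (n+2)
      = (z - b (n+1)) * helSol a b z c0 c1 (n+1) - a n * helSol a b z c0 c1 n := by
    rw [this, mul_div_cancel₀ _ (ha (n+1))]
  linear_combination h2

set_option maxHeartbeats 1000000 in
/-- scalar Hellinger theorem, pointwise form: if for some `z₀ ∈ ℂ` every
solution of the scalar three-term recurrence
`a_{i-1} u_{i-1} + b_i u_i + a_i u_{i+1} = z u_i` (`i ≥ 1`) at `z = z₀` is square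
summable, then the same holds at every `z ∈ ℂ`.  Here `b i` for `i ≥ 1` are the diagonal
coefficients (the value `b 0` is irrelevant). -/
theorem statement19 (a b : ℕ → ℂ) (ha : ∀ i, a i ≠ 0) (z0 : ℂ)
    (h : ∀ u : ℕ → ℂ,
      (∀ i : ℕ, a i * u i + b (i + 1) * u (i + 1) + a (i + 1) * u (i + 2)
        = z0 * u (i + 1)) →
      Summable (fun i : ℕ => ‖u i‖ ^ 2)) :
    ∀ z : ℂ, ∀ u : ℕ → ℂ,
      (∀ i : ℕ, a i * u i + b (i + 1) * u (i + 1) + a (i + 1) * u (i + 2)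
        = z * u (i + 1)) →
      Summable (fun i : ℕ => ‖u i‖ ^ 2) := by
  intro z u hu
  by_cases hz : z = z0
  · exact h u (by simpa [hz] using hu)
  -- the two fundamental solutions at z0
  obtain ⟨φ, hφ, hφ0, hφ1⟩ :
      ∃ φ : ℕ → ℂ, (∀ n, a n * φ n + b (n+1) * φ (n+1) + a (n+1) * φ (n+2) = z0 * φ (n+1))
        ∧ φ 0 = 1 ∧ φ 1 = 0 :=
    ⟨helSol a b z0 1 0, helSol_rec a b ha z0 1 0, rfl, rfl⟩
  obtain ⟨ψ, hψ, hψ0, hψ1⟩ :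
      ∃ ψ : ℕ → ℂ, (∀ n, a n * ψ n + b (n+1) * ψ (n+1) + a (n+1) * ψ (n+2) = z0 * ψ (n+1))
        ∧ ψ 0 = 0 ∧ ψ 1 = 1 / a 0 :=
    ⟨helSol a b z0 0 (1 / a 0), helSol_rec a b ha z0 0 (1 / a 0), rfl, rfl⟩
  -- Wronskian is identically 1
  have hW : ∀ n, a n * (φ n * ψ (n+1) - φ (n+1) * ψ n) = 1 := by
    intro n
    induction n with
    | zero =>
      rw [hφ0, hφ1, hψ0, hψ1]
      field_simp [ha 0]
      simp
    | succ n ih =>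
      have := hφ n
      have := hψ n
      linear_combination ih + φ (n+1) * hψ n - ψ (n+1) * hφ n
  have hφsum : Summable fun i => ‖φ i‖ ^ 2 := h φ hφ
  have hψsum : Summable fun i => ‖ψ i‖ ^ 2 := h ψ hψ
  set f : ℕ → ℝ := fun n => ‖φ n‖ + ‖ψ n‖ with hfdef
  have hfnn : ∀ n, 0 ≤ f n := fun n => add_nonneg (norm_nonneg _) (norm_nonneg _)
  have hf2 : Summable fun n => f n ^ 2 := by
    apply Summable.of_nonneg_of_le (fun n => sq_nonneg _) (fun n => ?_)
      ((hφsum.add hψsum).mul_left 2)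
    have := sq_nonneg (‖φ n‖ - ‖ψ n‖)
    simp only [hfdef]
    nlinarith
  set ε : ℝ := ‖z - z0‖ with hεdef
  have hε : 0 < ε := by
    simp only [hεdef, norm_pos_iff]
    exact sub_ne_zero.mpr hz
  -- choose m so that the tail of f^2 is small
  obtain ⟨m, hm⟩ : ∃ m, (∑' k, f (k + m) ^ 2) ≤ 1 / (2 * ε) := by
    have := tendsto_sum_nat_add (fun n => f n ^ 2)
    have hpos : (0:ℝ) < 1 / (2 * ε) := by positivity
    rcases (this.eventually (ge_mem_nhds hpos)).exists with ⟨m, hm⟩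
    exact ⟨m, hm⟩
  set δ : ℝ := ∑' k, f (k + m) ^ 2 with hδdef
  have hδnn : 0 ≤ δ := tsum_nonneg fun k => sq_nonneg _
  have hδ' : ε * δ ≤ 1 / 2 := by
    have h2ε : (0:ℝ) < 2 * ε := by positivity
    rw [le_div_iff₀ h2ε] at hm
    nlinarith
  have hIco : ∀ n, (∑ k ∈ Ico m n, f k ^ 2) ≤ δ := by
    intro n
    rw [Finset.sum_Ico_eq_sum_range]
    calc (∑ k ∈ range (n - m), f (m + k) ^ 2)
        = ∑ k ∈ range (n - m), f (k + m) ^ 2 := by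
          refine Finset.sum_congr rfl fun k _ => by rw [Nat.add_comm]
      _ ≤ δ := Summable.sum_le_tsum _ (fun k _ => sq_nonneg _)
          ((summable_nat_add_iff m).mpr hf2)
  -- variation of constants
  set c : ℕ → ℂ := fun k => (z - z0) * u k with hcdef
  set P : ℕ → ℂ := fun n => ∑ k ∈ Ico m n, φ k * c k with hPdef
  set Q : ℕ → ℂ := fun n => ∑ k ∈ Ico m n, ψ k * c k with hQdef
  set v : ℕ → ℂ := fun n => ψ n * P n - φ n * Q n with hvdef
  have hPs : ∀ n, m ≤ n → P (n+1) = P n + φ n * c n := by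
    intro n hn; simp only [hPdef]; rw [Finset.sum_Ico_succ_top hn]
  have hQs : ∀ n, m ≤ n → Q (n+1) = Q n + ψ n * c n := by
    intro n hn; simp only [hQdef]; rw [Finset.sum_Ico_succ_top hn]
  have hv : ∀ n, m ≤ n →
      a n * v n + b (n+1) * v (n+1) + a (n+1) * v (n+2) = z0 * v (n+1) + c (n+1) := by
    intro n hn
    have e1 := hPs n hn
    have e2 := hPs (n+1) (hn.trans (Nat.le_succ n))
    have e3 := hQs n hn
    have e4 := hQs (n+1) (hn.trans (Nat.le_succ n))
    simp only [hvdef]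
    rw [e2, e4, e1, e3]
    linear_combination (P n + φ n * c n) * hψ n - (Q n + ψ n * c n) * hφ n
      + c (n+1) * hW (n+1)
  -- w = u - v satisfies the homogeneous equation at z0 from index m on
  set w : ℕ → ℂ := fun n => u n - v n with hwdef
  have hw : ∀ n, m ≤ n →
      a n * w n + b (n+1) * w (n+1) + a (n+1) * w (n+2) = z0 * w (n+1) := by
    intro n hn
    simp only [hwdef]
    have h1 := hu n
    have h2 := hv n hn
    simp only [hcdef] at h2 ⊢
    linear_combination h1 - h2
  -- w agrees with a global solution r = α φ + β ψ on [m, ∞)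
  set α : ℂ := a m * (w m * ψ (m+1) - w (m+1) * ψ m) with hαdef
  set β : ℂ := a m * (φ m * w (m+1) - φ (m+1) * w m) with hβdef
  set r : ℕ → ℂ := fun n => α * φ n + β * ψ n with hrdef
  have hr : ∀ n, a n * r n + b (n+1) * r (n+1) + a (n+1) * r (n+2) = z0 * r (n+1) := by
    intro n
    simp only [hrdef]
    linear_combination α * hφ n + β * hψ n
  have hrm : r m = w m := by
    simp only [hrdef, hαdef, hβdef]
    linear_combination w m * hW m
  have hrm1 : r (m+1) = w (m+1) := by
    simp only [hrdef, hαdef, hβdef]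
    linear_combination w (m+1) * hW m
  have hrw : ∀ k, r (m + k) = w (m + k) ∧ r (m + k + 1) = w (m + k + 1) := by
    intro k
    induction k with
    | zero => exact ⟨hrm, hrm1⟩
    | succ k ih =>
      refine ⟨ih.2, ?_⟩
      have h1 := hr (m + k)
      have h2 := hw (m + k) (Nat.le_add_right m k)
      rw [ih.1, ih.2] at h1
      have : a (m + k + 1) * r (m + k + 2) = a (m + k + 1) * w (m + k + 2) := by
        linear_combination h1 - h2
      have h3 := mul_left_cancel₀ (ha (m + k + 1)) this
      have heq : m + (k + 1) + 1 = m + k + 2 := by omega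
      rw [heq]
      exact h3
  have hrw' : ∀ n, m ≤ n → r n = w n := by
    intro n hn
    obtain ⟨k, rfl⟩ := Nat.exists_eq_add_of_le hn
    exact (hrw k).1
  have hrsum : Summable fun i => ‖r i‖ ^ 2 := h r hr
  set R2 : ℝ := ∑' i, ‖r i‖ ^ 2 with hR2def
  have hR2nn : 0 ≤ R2 := tsum_nonneg fun i => sq_nonneg _
  -- pointwise bound on v
  have hvb : ∀ n, ‖v n‖ ≤ ε * f n * ∑ k ∈ Ico m n, f k * ‖u k‖ := by
    intro n
    have : v n = ∑ k ∈ Ico m n, (ψ n * φ k - φ n * ψ k) * c k := by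
      simp only [hvdef, hPdef, hQdef, Finset.mul_sum, ← Finset.sum_sub_distrib]
      refine Finset.sum_congr rfl fun k _ => by ring
    rw [this]
    calc ‖∑ k ∈ Ico m n, (ψ n * φ k - φ n * ψ k) * c k‖
        ≤ ∑ k ∈ Ico m n, ‖(ψ n * φ k - φ n * ψ k) * c k‖ := norm_sum_le _ _
      _ ≤ ∑ k ∈ Ico m n, ε * f n * (f k * ‖u k‖) := by
          refine Finset.sum_le_sum fun k _ => ?_
          rw [norm_mul, hcdef]
          simp only [norm_mul]
          have h1 : ‖ψ n * φ k - φ n * ψ k‖ ≤ f n * f k := by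
            calc ‖ψ n * φ k - φ n * ψ k‖ ≤ ‖ψ n * φ k‖ + ‖φ n * ψ k‖ := norm_sub_le _ _
              _ = ‖ψ n‖ * ‖φ k‖ + ‖φ n‖ * ‖ψ k‖ := by rw [norm_mul, norm_mul]
              _ ≤ f n * f k := by
                  simp only [hfdef]
                  nlinarith [norm_nonneg (φ n), norm_nonneg (ψ n), norm_nonneg (φ k),
                    norm_nonneg (ψ k)]
          have h2 : (0:ℝ) ≤ ‖z - z0‖ * ‖u k‖ := by positivity
          calc ‖ψ n * φ k - φ n * ψ k‖ * (‖z - z0‖ * ‖u k‖)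
              ≤ f n * f k * (‖z - z0‖ * ‖u k‖) := by
                exact mul_le_mul_of_nonneg_right h1 h2
            _ = ε * f n * (f k * ‖u k‖) := by rw [hεdef]; ring
      _ = ε * f n * ∑ k ∈ Ico m n, f k * ‖u k‖ := by rw [Finset.mul_sum]
  -- main a priori bound on partial sums of ‖u‖² beyond m
  have key : ∀ n, (∑ k ∈ Ico m n, ‖u k‖ ^ 2) ≤ 4 * R2 := by
    intro n
    obtain ⟨S, hSdef⟩ : ∃ S : ℝ, S = ∑ k ∈ Ico m n, ‖u k‖ ^ 2 := ⟨_, rfl⟩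
    rw [← hSdef]
    have hSnn : 0 ≤ S := hSdef ▸ Finset.sum_nonneg fun k _ => sq_nonneg _
    have hterm : ∀ k ∈ Ico m n, ‖u k‖ ^ 2 ≤ 2 * ‖r k‖ ^ 2 + 2 * ε ^ 2 * f k ^ 2 * (δ * S) := by
      intro k hk
      rw [Finset.mem_Ico] at hk
      have huk : u k = r k + v k := by
        have := hrw' k hk.1
        simp only [hwdef] at this
        rw [this]; ring
      have hnu : ‖u k‖ ≤ ‖r k‖ + ‖v k‖ := by rw [huk]; exact norm_add_le _ _
      have hvk : ‖v k‖ ≤ ε * f k * ∑ j ∈ Ico m k, f j * ‖u j‖ := hvb k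
      have hCS : (∑ j ∈ Ico m k, f j * ‖u j‖) ^ 2 ≤ δ * S := by
        calc (∑ j ∈ Ico m k, f j * ‖u j‖) ^ 2
            ≤ (∑ j ∈ Ico m k, f j ^ 2) * ∑ j ∈ Ico m k, ‖u j‖ ^ 2 :=
              Finset.sum_mul_sq_le_sq_mul_sq _ _ _
          _ ≤ δ * S := by
              have h1 : (∑ j ∈ Ico m k, f j ^ 2) ≤ δ := hIco k
              have h2 : (∑ j ∈ Ico m k, ‖u j‖ ^ 2) ≤ S := by
                rw [hSdef]
                apply Finset.sum_le_sum_of_subset_of_nonneg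
                · exact Finset.Ico_subset_Ico le_rfl (le_of_lt hk.2)
                · exact fun j _ _ => sq_nonneg _
              have h1nn : (0:ℝ) ≤ ∑ j ∈ Ico m k, f j ^ 2 :=
                Finset.sum_nonneg fun j _ => sq_nonneg _
              have h2nn : (0:ℝ) ≤ ∑ j ∈ Ico m k, ‖u j‖ ^ 2 :=
                Finset.sum_nonneg fun j _ => sq_nonneg _
              nlinarith
      have hvknn : 0 ≤ ‖v k‖ := norm_nonneg _
      have hsumnn : 0 ≤ ∑ j ∈ Ico m k, f j * ‖u j‖ :=
        Finset.sum_nonneg fun j _ => mul_nonneg (hfnn j) (norm_nonneg _)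
      have hvk2 : ‖v k‖ ^ 2 ≤ ε ^ 2 * f k ^ 2 * (δ * S) := by
        have : ‖v k‖ ^ 2 ≤ (ε * f k * ∑ j ∈ Ico m k, f j * ‖u j‖) ^ 2 := by
          apply sq_le_sq' <;> nlinarith [hfnn k, hε.le]
        calc ‖v k‖ ^ 2 ≤ (ε * f k * ∑ j ∈ Ico m k, f j * ‖u j‖) ^ 2 := this
          _ = ε ^ 2 * f k ^ 2 * (∑ j ∈ Ico m k, f j * ‖u j‖) ^ 2 := by ring
          _ ≤ ε ^ 2 * f k ^ 2 * (δ * S) := by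
              apply mul_le_mul_of_nonneg_left hCS; positivity
      have hsq : ‖u k‖ ^ 2 ≤ (‖r k‖ + ‖v k‖) ^ 2 :=
        pow_le_pow_left₀ (norm_nonneg _) hnu 2
      nlinarith [norm_nonneg (r k), sq_nonneg (‖r k‖ - ‖v k‖)]
    have hsum : S ≤ 2 * R2 + 2 * ε ^ 2 * δ * S * ∑ k ∈ Ico m n, f k ^ 2 := by
      calc S ≤ ∑ k ∈ Ico m n, (2 * ‖r k‖ ^ 2 + 2 * ε ^ 2 * f k ^ 2 * (δ * S)) := by
            conv_lhs => rw [hSdef]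
            exact Finset.sum_le_sum hterm
        _ = 2 * (∑ k ∈ Ico m n, ‖r k‖ ^ 2) + 2 * ε ^ 2 * δ * S * ∑ k ∈ Ico m n, f k ^ 2 := by
            rw [Finset.sum_add_distrib]
            congr 1
            · rw [Finset.mul_sum]
            · rw [Finset.mul_sum]
              exact Finset.sum_congr rfl fun k _ => by ring
        _ ≤ 2 * R2 + 2 * ε ^ 2 * δ * S * ∑ k ∈ Ico m n, f k ^ 2 := by
            have : (∑ k ∈ Ico m n, ‖r k‖ ^ 2) ≤ R2 := by
              apply Summable.sum_le_tsum _ (fun k _ => sq_nonneg _) hrsum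
            linarith
    have hfin : 2 * ε ^ 2 * δ * S * (∑ k ∈ Ico m n, f k ^ 2) ≤ S / 2 := by
      have hT := hIco n
      have h2 : 2 * ε ^ 2 * δ * S * (∑ k ∈ Ico m n, f k ^ 2) ≤ 2 * ε ^ 2 * δ * S * δ :=
        mul_le_mul_of_nonneg_left hT (by positivity)
      have h3 : (ε * δ) * (ε * δ) ≤ (1/2 : ℝ) * (1/2) :=
        mul_le_mul hδ' hδ' (mul_nonneg hε.le hδnn) (by norm_num)
      nlinarith [h2, mul_le_mul_of_nonneg_left h3 hSnn]
    linarith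
  -- conclude summability
  apply summable_of_sum_range_le (c := (∑ k ∈ range m, ‖u k‖ ^ 2) + 4 * R2)
    (fun n => sq_nonneg _)
  intro n
  calc (∑ k ∈ range n, ‖u k‖ ^ 2) ≤ ∑ k ∈ range (m + n), ‖u k‖ ^ 2 := by
        apply Finset.sum_le_sum_of_subset_of_nonneg
        · exact Finset.range_subset_range.mpr (Nat.le_add_left n m)
        · exact fun k _ _ => sq_nonneg _
    _ = (∑ k ∈ range m, ‖u k‖ ^ 2) + ∑ k ∈ Ico m (m + n), ‖u k‖ ^ 2 := by
        rw [Finset.range_eq_Ico,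
          ← Finset.sum_Ico_consecutive _ (Nat.zero_le m) (Nat.le_add_right m n), Finset.range_eq_Ico]
    _ ≤ (∑ k ∈ range m, ‖u k‖ ^ 2) + 4 * R2 := by linarith [key (m + n)]
end
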